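/- Let G = (V,E) be connected and non-bipartite, let v*_1, v*_2 be adjacent vertices, and set V* = {v*_1, v*_2} ∪ (N_G(v*_1) ∩ N_G(v*_2)). Suppose G has a gap-free ordering σ = v_1,…,v_n with v*_1 = v_{i_red+1} and v*_2 = v_{i_blue−1} for a proper coloring c of σ, under which {v_i : i_red+1 ≤ i ≤ i_blue−1} induces a clique, v_{i_red+1} has no neighbor v_j with j ≥ i_blue, and v_{i_blue−1} has no neighbor v_j with j ≤ i_red. Then G[V*] is the unique maximal clique of G containing the edge v*_1 v*_2, and V* = {v_i : i_red+1 ≤ i ≤ i_blue−1}. -/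
import Mathlib


/-- Gap condition (g1) for the index pair `(i,j)` under ordering `σ`. -/
def GapG1 {V : Type*} {n : ℕ} (G : SimpleGraph V) (σ : Fin n ≃ V) (i j : Fin n) : Prop :=
  (∃ j' j'' : Fin n, j' < j ∧ j < j'' ∧ G.Adj (σ i) (σ j') ∧ G.Adj (σ i) (σ j'')) ∨
  (∃ i' i'' : Fin n, i' < i ∧ i < i'' ∧ G.Adj (σ i') (σ j) ∧ G.Adj (σ i'') (σ j))

/-- Gap condition (g2). -/
def GapG2 {V : Type*} {n : ℕ} (G : SimpleGraph V) (σ : Fin n ≃ V) (i j : Fin n) : Prop :=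
  ∃ i' j' : Fin n, j' < i ∧ j < i' ∧ G.Adj (σ i) (σ i') ∧ G.Adj (σ j') (σ j)

/-- Gap condition (g3). -/
def GapG3 {V : Type*} {n : ℕ} (G : SimpleGraph V) (σ : Fin n ≃ V) (i j : Fin n) : Prop :=
  ∃ i' j' : Fin n, i' < j ∧ i < j' ∧ G.Adj (σ i) (σ i') ∧ G.Adj (σ j) (σ j')

/-- `σ` is a gap-free ordering of the vertices of `G`: no non-adjacent pair
satisfies any of (g1), (g2), (g3). -/
def GapFree {V : Type*} {n : ℕ} (G : SimpleGraph V) (σ : Fin n ≃ V) : Prop :=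
  ∀ i j : Fin n, i < j → ¬ G.Adj (σ i) (σ j) →
    ¬ (GapG1 G σ i j ∨ GapG2 G σ i j ∨ GapG3 G σ i j)

/-- In the situation of the core of a gap-free ordering of a connected non-bipartite
graph: `V* = {v*₁, v*₂} ∪ (N(v*₁) ∩ N(v*₂))` is the unique maximal clique containing
the edge `v*₁v*₂`, and it equals the interval `{v_{i_red+1},…,v_{i_blue−1}}`. -/
theorem core_unique_maximal_clique
    {V : Type*} [Fintype V] [DecidableEq V] {n : ℕ}
    (G : SimpleGraph V) (σ : Fin n ≃ V)
    (hconn : G.Connected)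
    (hnonbip : ¬ ∃ f : V → Bool, ∀ u v : V, G.Adj u v → f u ≠ f v)
    (hgf : GapFree G σ)
    (i1 i2 : Fin n) (hlt : i1 < i2)
    (hadj : G.Adj (σ i1) (σ i2))
    (hcl : ∀ k l : Fin n, i1 ≤ k → k ≤ i2 → i1 ≤ l → l ≤ i2 → k ≠ l →
      G.Adj (σ k) (σ l))
    (h1 : ∀ j : Fin n, i2 < j → ¬ G.Adj (σ i1) (σ j))
    (h2 : ∀ j : Fin n, j < i1 → ¬ G.Adj (σ i2) (σ j)) :
    G.IsClique ({σ i1, σ i2} ∪ (G.neighborSet (σ i1) ∩ G.neighborSet (σ i2))) ∧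
    (∀ K : Set V, G.IsClique K → σ i1 ∈ K → σ i2 ∈ K →
      K ⊆ {σ i1, σ i2} ∪ (G.neighborSet (σ i1) ∩ G.neighborSet (σ i2))) ∧
    ({σ i1, σ i2} ∪ (G.neighborSet (σ i1) ∩ G.neighborSet (σ i2)) =
      ⇑σ '' {k : Fin n | i1 ≤ k ∧ k ≤ i2}) := by

  have hset : ({σ i1, σ i2} ∪ (G.neighborSet (σ i1) ∩ G.neighborSet (σ i2)) :
      Set V) = ⇑σ '' {k : Fin n | i1 ≤ k ∧ k ≤ i2} := by
    ext u
    constructor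
    · rintro (h | h)
      · rcases h with h | h
        · exact ⟨i1, ⟨le_refl _, le_of_lt hlt⟩, h.symm⟩
        · exact ⟨i2, ⟨le_of_lt hlt, le_refl _⟩, h.symm⟩
      · rcases h with ⟨ha1, ha2⟩
        refine ⟨σ.symm u, ⟨?_, ?_⟩, σ.apply_symm_apply u⟩
        · by_contra hc
          push_neg at hc
          exact h2 _ hc (by simpa using ha2)
        · by_contra hc
          push_neg at hc
          exact h1 _ hc (by simpa using ha1)
    · rintro ⟨k, ⟨hk1, hk2⟩, rfl⟩
      by_cases e1 : k = i1
      · subst e1; exact Or.inl (Or.inl rfl)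
      by_cases e2 : k = i2
      · subst e2; exact Or.inl (Or.inr rfl)
      · exact Or.inr ⟨(hcl i1 k le_rfl (le_of_lt hlt) hk1 hk2
          (fun h => e1 h.symm)), (hcl i2 k (le_of_lt hlt) le_rfl hk1 hk2
          (fun h => e2 h.symm))⟩
  refine ⟨?_, ?_, hset⟩
  · rw [hset]
    rintro u ⟨k, ⟨hk1, hk2⟩, rfl⟩ v ⟨l, ⟨hl1, hl2⟩, rfl⟩ hne
    exact hcl k l hk1 hk2 hl1 hl2 (fun h => hne (by rw [h]))
  · intro K hK hm1 hm2 w hw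
    by_cases e1 : w = σ i1
    · exact Or.inl (Or.inl e1)
    by_cases e2 : w = σ i2
    · exact Or.inl (Or.inr e2)
    · exact Or.inr ⟨(hK hm1 hw (fun h => e1 h.symm)), (hK hm2 hw (fun h => e2 h.symm))⟩
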